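/- Let ε₁,…,εₙ be nonzero complex numbers with |ε₁| ≤ |ε₂| ≤ ⋯ ≤ |εₙ|. Then ∏_{1 ≤ i < j ≤ n} |1 - ε_i/ε_j|² ≤ n^n. -/

import Mathlib

open Finset
open scoped ComplexOrder

namespace RemakBertinAux

lemma abs_det_sq_le {n : ℕ} (M : Matrix (Fin n) (Fin n) ℂ)
    (hM : ∀ i j, ‖M i j‖ ≤ 1) :
    ‖M.det‖ ^ 2 ≤ (n : ℝ) ^ n := by
  rcases Nat.eq_zero_or_pos n with h0 | hn
  · subst h0; simp [Matrix.det_fin_zero]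
  have hps : (M * M.conjTranspose).PosSemidef := Matrix.posSemidef_self_mul_conjTranspose M
  have hherm : (M * M.conjTranspose).IsHermitian := hps.isHermitian
  set ev := hherm.eigenvalues with hev
  have hevnn : ∀ i, 0 ≤ ev i := fun i => hps.eigenvalues_nonneg i
  have hdet : (M * M.conjTranspose).det = ∏ i, (ev i : ℂ) := hherm.det_eq_prod_eigenvalues
  have h1 : (Complex.normSq M.det : ℂ) = ∏ i, (ev i : ℂ) := by
    rw [← hdet, Matrix.det_mul, Matrix.det_conjTranspose, ← Complex.mul_conj]
    rfl
  have h1' : Complex.normSq M.det = ∏ i, ev i := by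
    have := h1
    rw [← Complex.ofReal_prod] at this
    exact_mod_cast this
  have htr : (M * M.conjTranspose).trace = ∑ i, (ev i : ℂ) := by
    conv_lhs => rw [hherm.spectral_theorem]
    rw [Unitary.conjStarAlgAut_apply, Matrix.trace_mul_comm, ← Matrix.mul_assoc, Unitary.coe_star_mul_self, Matrix.one_mul,
      Matrix.trace_diagonal]
    rfl
  have htr2 : (M * M.conjTranspose).trace = ((∑ i, ∑ j, Complex.normSq (M i j) : ℝ) : ℂ) := by
    rw [Matrix.trace]
    push_cast
    refine Finset.sum_congr rfl fun i _ => ?_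
    rw [Matrix.diag_apply, Matrix.mul_apply]
    refine Finset.sum_congr rfl fun j _ => ?_
    rw [Matrix.conjTranspose_apply, ← Complex.mul_conj]
    rfl
  have hsum : ∑ i, ev i = ∑ i, ∑ j, Complex.normSq (M i j) := by
    have := htr.symm.trans htr2
    rw [← Complex.ofReal_sum] at this
    exact_mod_cast this
  have htrb : ∑ i, ev i ≤ (n : ℝ) * n := by
    rw [hsum]
    calc ∑ i : Fin n, ∑ j : Fin n, Complex.normSq (M i j)
        ≤ ∑ _i : Fin n, (n : ℝ) := by
          refine Finset.sum_le_sum fun i _ => ?_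
          calc ∑ j, Complex.normSq (M i j) ≤ ∑ _j : Fin n, (1:ℝ) := by
                refine Finset.sum_le_sum fun j _ => ?_
                rw [← Complex.sq_norm]
                exact pow_le_one₀ (norm_nonneg _) (hM i j)
            _ = (n : ℝ) := by simp
      _ = (n : ℝ) * n := by simp [mul_comm]
  have hnne : (n : ℝ) ≠ 0 := Nat.cast_ne_zero.2 hn.ne'
  have hgm : ∏ i, (ev i) ^ (1 / (n:ℝ)) ≤ ∑ i, (1 / (n:ℝ)) * ev i := by
    refine Real.geom_mean_le_arith_mean_weighted univ _ _ (fun i _ => by positivity) ?_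
      (fun i _ => hevnn i)
    simp [Finset.card_univ]
    field_simp
  have hsum2 : ∑ i, (1 / (n:ℝ)) * ev i ≤ (n : ℝ) := by
    rw [← Finset.mul_sum]
    calc (1/(n:ℝ)) * ∑ i, ev i ≤ (1/(n:ℝ)) * ((n:ℝ)*n) := by
          refine mul_le_mul_of_nonneg_left htrb (by positivity)
      _ = (n : ℝ) := by field_simp
  have hG : (0:ℝ) ≤ ∏ i, (ev i) ^ (1 / (n:ℝ)) :=
    Finset.prod_nonneg fun i _ => Real.rpow_nonneg (hevnn i) _
  have key : ∏ i, ev i ≤ (n : ℝ) ^ n := by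
    have h2 : (∏ i, (ev i) ^ (1 / (n:ℝ))) ^ (n : ℕ) ≤ (n : ℝ) ^ n :=
      pow_le_pow_left₀ hG (hgm.trans hsum2) n
    calc ∏ i, ev i = (∏ i, (ev i) ^ (1 / (n:ℝ))) ^ (n:ℕ) := by
          rw [← Finset.prod_pow]
          refine Finset.prod_congr rfl fun i _ => ?_
          rw [← Real.rpow_natCast ((ev i) ^ (1/(n:ℝ))) n, ← Real.rpow_mul (hevnn i)]
          rw [one_div_mul_cancel hnne, Real.rpow_one]
      _ ≤ (n : ℝ) ^ n := h2
  rw [Complex.sq_norm]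
  exact h1' ▸ key

lemma prod_swap_order {n : ℕ} (f : Fin n → Fin n → ℂ) :
    ∏ j : Fin n, ∏ i ∈ Finset.Iio j, f i j = ∏ i : Fin n, ∏ j ∈ Finset.Ioi i, f i j := by
  rw [Finset.prod_comm' (h := ?_)]
  intro j i
  simp [Finset.mem_Iio, Finset.mem_Ioi]

lemma unit_case {n : ℕ} (u : Fin n → ℂ) (hu : ∀ j, ‖u j‖ = 1) :
    ∏ j : Fin n, ∏ i ∈ Finset.Iio j, (‖1 - u i / u j‖) ^ 2 ≤ (n : ℝ) ^ n := by
  have hne : ∀ j, u j ≠ 0 := by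
    intro j h
    have h2 := hu j
    rw [h, norm_zero] at h2
    norm_num at h2
  have h1 : ∀ i j : Fin n, ‖1 - u i / u j‖ = ‖u j - u i‖ := by
    intro i j
    have : (1 : ℂ) - u i / u j = (u j - u i) / u j := by
      rw [sub_div, div_self (hne j)]
    rw [this, norm_div, hu j, div_one]
  calc ∏ j : Fin n, ∏ i ∈ Finset.Iio j, (‖1 - u i / u j‖) ^ 2
      = ∏ j : Fin n, ∏ i ∈ Finset.Iio j, (‖u j - u i‖) ^ 2 := by
        refine Finset.prod_congr rfl fun j _ => Finset.prod_congr rfl fun i _ => ?_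
        rw [h1]
    _ = (‖∏ j : Fin n, ∏ i ∈ Finset.Iio j, (u j - u i)‖) ^ 2 := by
        rw [norm_prod, ← Finset.prod_pow]
        refine Finset.prod_congr rfl fun j _ => ?_
        rw [norm_prod, ← Finset.prod_pow]
    _ = (‖(Matrix.vandermonde u).det‖) ^ 2 := by
        rw [Matrix.det_vandermonde]
        congr 1
        rw [prod_swap_order (fun i j => u j - u i)]
    _ ≤ (n : ℝ) ^ n := by
        refine abs_det_sq_le _ fun i j => ?_
        rw [Matrix.vandermonde_apply, norm_pow, hu i, one_pow]

lemma diff_finset_prod {ι : Type*} (s : Finset ι) (F : ι → ℂ → ℂ)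
    (hF : ∀ i ∈ s, Differentiable ℂ (F i)) :
    Differentiable ℂ (fun z => ∏ i ∈ s, F i z) := by
  classical
  induction s using Finset.induction_on with
  | empty => simpa using differentiable_const (1 : ℂ)
  | @insert a s ha ih =>
      have h1 : Differentiable ℂ (F a) := hF a (Finset.mem_insert_self a s)
      have h2 : Differentiable ℂ (fun z => ∏ i ∈ s, F i z) :=
        ih fun i hi => hF i (Finset.mem_insert_of_mem hi)
      simp only [Finset.prod_insert ha]
      exact h1.mul h2

/-- the product we bound -/
noncomputable def P {n : ℕ} (ε : Fin n → ℂ) : ℝ :=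
  ∏ j : Fin n, ∏ i ∈ Finset.Iio j, (‖1 - ε i / ε j‖) ^ 2

lemma P_eq_abs_sq {n : ℕ} (ε : Fin n → ℂ) :
    P ε = (‖∏ j : Fin n, ∏ i ∈ Finset.Iio j, (1 - ε i / ε j)‖) ^ 2 := by
  rw [P, norm_prod, ← Finset.prod_pow]
  refine Finset.prod_congr rfl fun j _ => ?_
  rw [norm_prod, ← Finset.prod_pow]

lemma main_aux (n : ℕ) (k : ℕ) : ∀ (ε : Fin n → ℂ), (∀ i, ε i ≠ 0) →
    (∀ i j : Fin n, i ≤ j → ‖ε i‖ ≤ ‖ε j‖) →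
    (Finset.image (fun i => ‖ε i‖) Finset.univ).card ≤ k →
    P ε ≤ (n : ℝ) ^ n := by
  induction k with
  | zero =>
      intro ε h0 hmono hc
      have hn : n = 0 := by
        by_contra hne
        haveI : NeZero n := ⟨hne⟩
        have hni : (Finset.image (fun i => ‖ε i‖) Finset.univ).Nonempty :=
          ⟨‖ε 0‖, Finset.mem_image_of_mem (fun i => ‖ε i‖)
            (Finset.mem_univ 0)⟩
        have := Finset.card_pos.2 hni
        omega
      subst hn
      simp [P]
  | succ k ih =>
      intro ε h0 hmono hc
      by_cases hk : (Finset.image (fun i => ‖ε i‖) Finset.univ).card ≤ k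
      · exact ih ε h0 hmono hk
      rcases Nat.eq_zero_or_pos n with hn0 | hnpos
      · subst hn0; simp [P]
      haveI : NeZero n := ⟨hnpos.ne'⟩
      set T := Finset.image (fun i => ‖ε i‖) Finset.univ with hT
      have hTcard : T.card = k + 1 := le_antisymm hc (by omega)
      by_cases hone : T.card ≤ 1
      · -- all moduli equal
        have hallmem : ∀ i, ‖ε i‖ ∈ T := fun i =>
          Finset.mem_image_of_mem (fun i => ‖ε i‖) (Finset.mem_univ i)
        have halleq : ∀ i, ‖ε i‖ = ‖ε 0‖ := fun i =>
          Finset.card_le_one.1 hone _ (hallmem i) _ (hallmem 0)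
        have hc0 : ‖ε 0‖ ≠ 0 := by
          simpa using h0 0
        set c : ℂ := (‖ε 0‖ : ℂ) with hcdef
        have hcne : c ≠ 0 := by
          simp [hcdef, hc0]
        set u : Fin n → ℂ := fun i => ε i / c with hu
        have huabs : ∀ j, ‖u j‖ = 1 := by
          intro j
          rw [hu]
          simp only [norm_div, hcdef]
          rw [Complex.norm_of_nonneg (norm_nonneg _), halleq j]
          field_simp
        have hratio : ∀ i j : Fin n, (1 : ℂ) - ε i / ε j = 1 - u i / u j := by
          intro i j
          have h2 : u i / u j = ε i / ε j := by
            rw [hu]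
            dsimp only
            rw [div_div_div_eq, mul_comm c (ε j), mul_div_mul_right _ _ hcne]
          rw [h2]
        have : P ε = P u := by
          rw [P, P]
          refine Finset.prod_congr rfl fun j _ => Finset.prod_congr rfl fun i _ => ?_
          rw [hratio]
        rw [this]
        exact unit_case u huabs
      · -- at least two distinct moduli: merging step
        have hT2 : 2 ≤ T.card := by omega
        have hTne : T.Nonempty := Finset.card_pos.1 (by omega)
        set m := T.min' hTne with hmdef
        have hmT : m ∈ T := Finset.min'_mem _ _
        have hmin : ∀ i, m ≤ ‖ε i‖ := fun i =>
          Finset.min'_le _ _ (Finset.mem_image_of_mem (fun i => ‖ε i‖)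
            (Finset.mem_univ i))
        have hmpos : 0 < m := by
          rcases Finset.mem_image.1 hmT with ⟨i, _, hi⟩
          rw [← hi]
          exact (norm_pos_iff.2 (h0 i))
        have hT'ne : (T.erase m).Nonempty := by
          rw [← Finset.card_pos, Finset.card_erase_of_mem hmT]
          omega
        set m' := (T.erase m).min' hT'ne with hm'def
        have hm'mem : m' ∈ T.erase m := Finset.min'_mem _ _
        have hm'T : m' ∈ T := Finset.mem_of_mem_erase hm'mem
        have hm'ne : m' ≠ m := Finset.ne_of_mem_erase hm'mem
        have hmm' : m < m' := lt_of_le_of_ne (Finset.min'_le _ _ hm'T) (Ne.symm hm'ne)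
        have hsecond : ∀ i, ‖ε i‖ ≠ m → m' ≤ ‖ε i‖ := by
          intro i hne
          exact Finset.min'_le _ _ (Finset.mem_erase.2
            ⟨hne, Finset.mem_image_of_mem (fun i => ‖ε i‖) (Finset.mem_univ i)⟩)
        set R : ℝ := m' / m with hRdef
        have hR1 : 1 < R := (one_lt_div hmpos).2 hmm'
        have hRpos : 0 < R := lt_trans one_pos hR1
        -- the holomorphic family
        classical
        set f : ℂ → ℂ := fun z => ∏ j : Fin n, ∏ i ∈ Finset.Iio j,
          (if ‖ε i‖ = m ∧ ‖ε j‖ ≠ m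
            then 1 - z * (ε i / ε j) else 1 - ε i / ε j) with hf
        have hdiff : Differentiable ℂ f := by
          rw [hf]
          refine diff_finset_prod _ _ fun j _ => ?_
          refine diff_finset_prod _ _ fun i _ => ?_
          by_cases hcond : ‖ε i‖ = m ∧ ‖ε j‖ ≠ m
          · have heq : (fun z : ℂ => if ‖ε i‖ = m ∧ ‖ε j‖ ≠ m
                then 1 - z * (ε i / ε j) else 1 - ε i / ε j)
                = fun z : ℂ => 1 - z * (ε i / ε j) := by
              funext z
              rw [if_pos hcond]
            rw [heq]
            exact (differentiable_const _).sub (differentiable_id.mul_const _)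
          · have heq : (fun z : ℂ => if ‖ε i‖ = m ∧ ‖ε j‖ ≠ m
                then 1 - z * (ε i / ε j) else 1 - ε i / ε j)
                = fun _ : ℂ => 1 - ε i / ε j := by
              funext z
              rw [if_neg hcond]
            rw [heq]
            exact differentiable_const _
        -- boundary bound
        have hbound : ∀ z : ℂ, ‖z‖ = R →
            ‖f z‖ ≤ Real.sqrt ((n:ℝ) ^ n) := by
          intro z hz
          have hz0 : z ≠ 0 := by
            intro h
            rw [h, norm_zero] at hz
            exact (ne_of_gt hRpos) hz.symm
          set ε' : Fin n → ℂ := fun i => if ‖ε i‖ = m then z * ε i else ε i with hε'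
          have h0' : ∀ i, ε' i ≠ 0 := by
            intro i
            rw [hε']
            dsimp only
            split_ifs
            · exact mul_ne_zero hz0 (h0 i)
            · exact h0 i
          have habs' : ∀ i, ‖ε' i‖
              = if ‖ε i‖ = m then m' else ‖ε i‖ := by
            intro i
            rw [hε']
            dsimp only
            split_ifs with h
            · rw [norm_mul, hz, h, hRdef, div_mul_cancel₀ _ (ne_of_gt hmpos)]
            · rfl
          have hmono' : ∀ i j : Fin n, i ≤ j → ‖ε' i‖ ≤ ‖ε' j‖ := by
            intro i j hij
            rw [habs' i, habs' j]
            by_cases hi : ‖ε i‖ = m <;> by_cases hj : ‖ε j‖ = m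
            · simp [hi, hj]
            · simp only [hi, hj, if_true, if_false]
              exact hsecond j hj
            · exfalso
              have := hmono i j hij
              rw [hj] at this
              exact hi (le_antisymm this (hmin i))
            · simp only [hi, hj, if_false]
              exact hmono i j hij
          have hcard' : (Finset.image (fun i => ‖ε' i‖) Finset.univ).card ≤ k := by
            have hsub : Finset.image (fun i => ‖ε' i‖) Finset.univ ⊆ T.erase m := by
              intro a ha
              rcases Finset.mem_image.1 ha with ⟨i, _, hi⟩
              rw [habs' i] at hi
              by_cases h : ‖ε i‖ = m
              · rw [if_pos h] at hi
                rw [← hi]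
                exact hm'mem
              · rw [if_neg h] at hi
                rw [← hi]
                exact Finset.mem_erase.2
                  ⟨h, Finset.mem_image_of_mem (fun i => ‖ε i‖) (Finset.mem_univ i)⟩
            calc (Finset.image (fun i => ‖ε' i‖) Finset.univ).card
                ≤ (T.erase m).card := Finset.card_le_card hsub
              _ = k := by rw [Finset.card_erase_of_mem hmT, hTcard]; omega
          have hP' : P ε' ≤ (n:ℝ)^n := ih ε' h0' hmono' hcard'
          -- |f z|^2 = P ε'
          have hfP : (‖f z‖)^2 = P ε' := by
            rw [hf]
            dsimp only
            rw [norm_prod, ← Finset.prod_pow, P]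
            refine Finset.prod_congr rfl fun j _ => ?_
            rw [norm_prod, ← Finset.prod_pow]
            refine Finset.prod_congr rfl fun i hi => ?_
            have hij : i < j := Finset.mem_Iio.1 hi
            congr 1
            by_cases hmi : ‖ε i‖ = m <;> by_cases hmj : ‖ε j‖ = m
            · rw [if_neg (by tauto)]
              congr 1
              rw [hε']
              dsimp only
              rw [if_pos hmi, if_pos hmj, mul_div_mul_left _ _ hz0]
            · rw [if_pos ⟨hmi, hmj⟩]
              congr 1
              rw [hε']
              dsimp only
              rw [if_pos hmi, if_neg hmj, mul_div_assoc]
            · exfalso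
              have := hmono i j (le_of_lt hij)
              rw [hmj] at this
              exact hmi (le_antisymm this (hmin i))
            · rw [if_neg (by tauto)]
              congr 1
              rw [hε']
              dsimp only
              rw [if_neg hmi, if_neg hmj]
          rw [Real.le_sqrt (norm_nonneg _) (by positivity)]
          rw [hfP]
          exact hP'
        -- apply maximum modulus principle
        have h1mem : (1 : ℂ) ∈ closure (Metric.ball (0:ℂ) R) := by
          apply subset_closure
          simp only [Metric.mem_ball, Complex.dist_eq, sub_zero]
          simpa using hR1
        have hfr : ∀ z ∈ frontier (Metric.ball (0:ℂ) R), ‖f z‖ ≤ Real.sqrt ((n:ℝ)^n) := by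
          intro z hzf
          rw [frontier_ball (0:ℂ) (ne_of_gt hRpos)] at hzf
          have hz : ‖z‖ = R := by
            simpa [Complex.dist_eq] using hzf
          exact hbound z hz
        have hmax : ‖f 1‖ ≤ Real.sqrt ((n:ℝ)^n) :=
          Complex.norm_le_of_forall_mem_frontier_norm_le Metric.isBounded_ball
            hdiff.diffContOnCl hfr h1mem
        -- f 1 is our product
        have hf1 : f 1 = ∏ j : Fin n, ∏ i ∈ Finset.Iio j, (1 - ε i / ε j) := by
          rw [hf]
          refine Finset.prod_congr rfl fun j _ => Finset.prod_congr rfl fun i _ => ?_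
          split_ifs <;> ring
        have : P ε = (‖f 1‖)^2 := by
          rw [P_eq_abs_sq, hf1]
        rw [this]
        calc (‖f 1‖)^2 ≤ (Real.sqrt ((n:ℝ)^n))^2 := by
              apply pow_le_pow_left₀ (norm_nonneg _)
              exact hmax
          _ = (n:ℝ)^n := Real.sq_sqrt (by positivity)

end RemakBertinAux

theorem stmt_5 (n : ℕ) (ε : Fin n → ℂ) (h0 : ∀ i, ε i ≠ 0)
    (hmono : ∀ i j : Fin n, i ≤ j → ‖ε i‖ ≤ ‖ε j‖) :
    ∏ j : Fin n, ∏ i ∈ Finset.Iio j,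
      (‖1 - ε i / ε j‖) ^ 2 ≤ (n : ℝ) ^ n :=
  RemakBertinAux.main_aux n _ ε h0 hmono le_rfl
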